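/- Let U ⊆ ℂ be a nonempty open connected set, let p ∈ U, and let f_1,…,f_m : U → ℂ be holomorphic functions that are linearly independent over ℂ. Then there exists an invertible m×m complex matrix A such that, setting g_i = ∑_{j=1}^{m} A_{ij} f_j, each g_i is not identically zero on U and the orders of vanishing of g_1, g_2, …, g_m at p are finite and strictly increasing: ord_p(g_1) < ord_p(g_2) < ⋯ < ord_p(g_m). -/

import Mathlib

open Filter Set
open scoped Topology

/-- Abstract Gaussian-elimination lemma: given "order-equals" and "order-at-least"
predicates `E`, `G` on a ℂ-module with suitable axioms, any linearly independent finite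
family can be replaced (within its span) by a linearly independent family with strictly
increasing orders. -/
lemma stmt7_aux {W : Type*} [AddCommGroup W] [Module ℂ W]
    (E G : ℕ → W → Prop)
    (hEG : ∀ n a, E n a → G n a)
    (hle : ∀ n k a, E n a → G k a → k ≤ n)
    (hGadd : ∀ n a b, G n a → G n b → G n (a + b))
    (hGsmul : ∀ n (c : ℂ) a, G n a → G n (c • a))
    (hGzero : ∀ n, G n (0 : W))
    (hGmono : ∀ m n a, m ≤ n → G n a → G m a)
    (hE : ∀ a : W, a ≠ 0 → ∃ n, E n a)
    (helim : ∀ n a b, E n a → E n b → ∃ c : ℂ, G (n + 1) (a - c • b)) :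
    ∀ (k : ℕ) (v : Fin k → W), LinearIndependent ℂ v →
      ∃ w : Fin k → W, LinearIndependent ℂ w ∧
        (∀ i, w i ∈ Submodule.span ℂ (Set.range v)) ∧
        ∃ ords : Fin k → ℕ, StrictMono ords ∧ ∀ i, E (ords i) (w i) := by
  intro k
  induction k with
  | zero =>
    intro v hv
    exact ⟨v, hv, fun i => i.elim0, fun i => i.elim0, fun i => i.elim0, fun i => i.elim0⟩
  | succ k ih =>
    intro v hv
    -- orders of the v i
    have hvne : ∀ i, v i ≠ 0 := fun i => hv.ne_zero i
    choose N hN using fun i => hE (v i) (hvne i)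
    -- pick an index of minimal order and move it to position 0
    obtain ⟨i₀, -, hmin⟩ := Finset.exists_min_image Finset.univ N ⟨0, Finset.mem_univ 0⟩
    set e : Fin (k + 1) ≃ Fin (k + 1) := Equiv.swap 0 i₀ with he
    set v' : Fin (k + 1) → W := v ∘ e with hv'def
    have hv' : LinearIndependent ℂ v' := hv.comp e e.injective
    have hrange : Set.range v' = Set.range v := e.surjective.range_comp v
    set n : ℕ := N (e 0) with hn
    have hE0 : E n (v' 0) := hN (e 0)
    have hnmin : ∀ i, n ≤ N (e i) := by
      intro i
      have h0 : e 0 = i₀ := Equiv.swap_apply_left 0 i₀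
      rw [hn, h0]
      exact hmin (e i) (Finset.mem_univ _)
    -- eliminate the order-n part from the other vectors
    have hcex : ∀ j : Fin k, ∃ c : ℂ, G (n + 1) (v' j.succ - c • v' 0) := by
      intro j
      rcases eq_or_lt_of_le (hnmin j.succ) with hEqn | hlt
      · exact helim n (v' j.succ) (v' 0) (hEqn ▸ hN (e j.succ)) hE0
      · exact ⟨0, by
          rw [zero_smul, sub_zero]
          exact hGmono (n + 1) _ _ hlt (hEG _ _ (hN (e j.succ)))⟩
    choose c hc using hcex
    set u : Fin k → W := fun j => v' j.succ - c j • v' 0 with hu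
    -- u is linearly independent
    have hu_indep : LinearIndependent ℂ u := by
      rw [Fintype.linearIndependent_iff]
      intro a ha i
      have key : ∑ i, (Fin.cons (-(∑ j, a j * c j)) a : Fin (k + 1) → ℂ) i • v' i = 0 := by
        rw [Fin.sum_univ_succ]
        simp only [Fin.cons_zero, Fin.cons_succ]
        calc (-(∑ j, a j * c j)) • v' 0 + ∑ j, a j • v' j.succ
            = ∑ j, (a j • v' j.succ - a j • c j • v' 0) := by
              rw [Finset.sum_sub_distrib]
              simp only [smul_smul, ← Finset.sum_smul]
              rw [neg_smul]
              abel
          _ = ∑ j, a j • u j := by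
              refine Finset.sum_congr rfl fun j _ => ?_
              rw [hu, smul_sub, smul_smul]
          _ = 0 := ha
      have := Fintype.linearIndependent_iff.mp hv' _ key i.succ
      simpa using this
    -- everything in the span of u has order ≥ n + 1
    have hspanG : ∀ x ∈ Submodule.span ℂ (Set.range u), G (n + 1) x := by
      intro x hx
      induction hx using Submodule.span_induction with
      | mem x hxm => obtain ⟨j, rfl⟩ := hxm; exact hc j
      | zero => exact hGzero _
      | add x y _ _ hx hy => exact hGadd _ _ _ hx hy
      | smul a x _ hx => exact hGsmul _ _ _ hx
    -- apply the induction hypothesis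
    obtain ⟨w', hw'ind, hw'mem, ords', hords'mono, hw'E⟩ := ih u hu_indep
    have hbig : ∀ j, n + 1 ≤ ords' j := fun j =>
      hle _ _ _ (hw'E j) (hspanG _ (hw'mem j))
    -- v' 0 is not in the span of w'
    have hspanle : Submodule.span ℂ (Set.range w') ≤ Submodule.span ℂ (Set.range u) := by
      rw [Submodule.span_le]
      rintro x ⟨j, rfl⟩
      exact hw'mem j
    have hnotmem : v' 0 ∉ Submodule.span ℂ (Set.range w') := by
      intro hmem
      have := hle _ _ _ hE0 (hspanG _ (hspanle hmem))
      omega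
    refine ⟨Fin.cons (v' 0) w', hw'ind.fin_cons hnotmem, ?_, Fin.cons n ords', ?_, ?_⟩
    · -- span membership
      have humem : ∀ j, u j ∈ Submodule.span ℂ (Set.range v) := by
        intro j
        refine sub_mem (Submodule.subset_span ?_) (Submodule.smul_mem _ _
          (Submodule.subset_span ?_))
        · exact ⟨e j.succ, rfl⟩
        · exact ⟨e 0, rfl⟩
      have hule : Submodule.span ℂ (Set.range u) ≤ Submodule.span ℂ (Set.range v) := by
        rw [Submodule.span_le]
        rintro x ⟨j, rfl⟩
        exact humem j
      intro i
      refine Fin.cases ?_ (fun j => ?_) i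
      · rw [Fin.cons_zero]
        exact Submodule.subset_span ⟨e 0, rfl⟩
      · rw [Fin.cons_succ]
        exact hule (hw'mem j)
    · -- strict monotonicity
      rw [Fin.strictMono_iff_lt_succ]
      intro i
      rw [Fin.cons_succ]
      rcases Fin.eq_zero_or_eq_succ i.castSucc with h | ⟨j', hj'⟩
      · rw [h, Fin.cons_zero]
        exact lt_of_lt_of_le (Nat.lt_succ_self n) (hbig i)
      · rw [hj', Fin.cons_succ]
        apply hords'mono
        have hval : (i.castSucc : ℕ) = (j' : ℕ) + 1 := by rw [hj']; rfl
        simp only [Fin.coe_castSucc] at hval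
        exact Fin.lt_def.mpr (by omega)
    · intro i
      refine Fin.cases ?_ (fun j => ?_) i
      · simpa using hE0
      · simpa using hw'E j

/-- Linearly independent holomorphic functions on a connected open set can
be transformed by an invertible matrix so that the new functions have finite, strictly
increasing orders of vanishing at a given point `p`. -/
theorem stmt_7 {U : Set ℂ} (hU : IsOpen U) (hUc : IsConnected U)
    (p : ℂ) (hp : p ∈ U)
    {m : ℕ} (f : Fin m → ℂ → ℂ) (hf : ∀ i, DifferentiableOn ℂ (f i) U)
    (hind : LinearIndependent ℂ fun i => U.restrict (f i)) :
    ∃ A : Matrix (Fin m) (Fin m) ℂ, IsUnit A ∧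
      ∃ ord : Fin m → ℕ, StrictMono ord ∧
        ∀ i : Fin m,
          (∃ z ∈ U, (∑ j, A i j * f j z) ≠ 0) ∧
          ∃ h : ℂ → ℂ, AnalyticAt ℂ h p ∧ h p ≠ 0 ∧
            ∀ᶠ z in nhds p, (∑ j, A i j * f j z) = (z - p) ^ (ord i) * h z := by
  classical
  have hfa : ∀ i, AnalyticOnNhd ℂ (f i) U := fun i => (hf i).analyticOnNhd hU
  set g : (Fin m → ℂ) → ℂ → ℂ := fun a z => ∑ j, a j * f j z with hg
  have hgaU : ∀ a, AnalyticOnNhd ℂ (g a) U := by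
    intro a z hz
    exact Finset.analyticAt_fun_sum _ fun j _ => analyticAt_const.mul (hfa j z hz)
  -- vanishing on U forces zero coefficients
  have hUzero : ∀ a : Fin m → ℂ, (∀ z ∈ U, g a z = 0) → a = 0 := by
    intro a hzero
    have hsum : ∑ i, a i • U.restrict (f i) = 0 := by
      funext z
      have := hzero z.1 z.2
      simp only [Finset.sum_apply, Pi.smul_apply, smul_eq_mul, Pi.zero_apply]
      exact this
    funext i
    exact Fintype.linearIndependent_iff.mp hind a hsum i
  have hnotev : ∀ a : Fin m → ℂ, a ≠ 0 → ¬ (∀ᶠ z in 𝓝 p, g a z = 0) := by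
    intro a ha hev
    exact ha (hUzero a fun z hz =>
      (hgaU a).eqOn_zero_of_preconnected_of_eventuallyEq_zero hUc.isPreconnected hp hev hz)
  -- order predicates
  set E : ℕ → (Fin m → ℂ) → Prop := fun n a => ∃ h : ℂ → ℂ, AnalyticAt ℂ h p ∧ h p ≠ 0 ∧
    ∀ᶠ z in 𝓝 p, g a z = (z - p) ^ n * h z with hEdef
  set G : ℕ → (Fin m → ℂ) → Prop := fun n a => ∃ h : ℂ → ℂ, AnalyticAt ℂ h p ∧
    ∀ᶠ z in 𝓝 p, g a z = (z - p) ^ n * h z with hGdef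
  have hEG : ∀ n a, E n a → G n a := by
    rintro n a ⟨h, han, -, hev⟩; exact ⟨h, han, hev⟩
  have hle : ∀ n k a, E n a → G k a → k ≤ n := by
    rintro n k a ⟨h₁, h₁an, h₁p, e₁⟩ ⟨h₂, h₂an, e₂⟩
    by_contra hkn
    push_neg at hkn
    have hψan : AnalyticAt ℂ (fun z => (z - p) ^ (k - n) * h₂ z) p :=
      ((analyticAt_id.sub analyticAt_const).pow _).mul h₂an
    have hfreq : ∀ᶠ z in 𝓝[≠] p, h₁ z = (z - p) ^ (k - n) * h₂ z := by
      rw [eventually_nhdsWithin_iff]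
      filter_upwards [e₁, e₂] with z hz1 hz2 hzp
      have hne : (z - p) ^ n ≠ 0 := pow_ne_zero _ (sub_ne_zero.mpr hzp)
      apply mul_left_cancel₀ hne
      rw [← hz1, hz2, ← mul_assoc, ← pow_add, Nat.add_sub_cancel' hkn.le]
    have heq : h₁ =ᶠ[𝓝 p] fun z => (z - p) ^ (k - n) * h₂ z :=
      (h₁an.frequently_eq_iff_eventually_eq hψan).mp hfreq.frequently
    have : h₁ p = 0 := by
      have := heq.eq_of_nhds
      simpa [sub_self, zero_pow (Nat.sub_ne_zero_of_lt hkn)] using this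
    exact h₁p this
  have hGadd : ∀ n a b, G n a → G n b → G n (a + b) := by
    rintro n a b ⟨h₁, h₁an, e₁⟩ ⟨h₂, h₂an, e₂⟩
    refine ⟨fun z => h₁ z + h₂ z, h₁an.add h₂an, ?_⟩
    filter_upwards [e₁, e₂] with z hz1 hz2
    have : g (a + b) z = g a z + g b z := by
      simp [hg, add_mul, Finset.sum_add_distrib]
    rw [this, hz1, hz2]; ring
  have hGsmul : ∀ n (c : ℂ) a, G n a → G n (c • a) := by
    rintro n c a ⟨h₁, h₁an, e₁⟩
    refine ⟨fun z => c * h₁ z, analyticAt_const.mul h₁an, ?_⟩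
    filter_upwards [e₁] with z hz1
    have : g (c • a) z = c * g a z := by
      simp [hg, Finset.mul_sum, mul_assoc]
    rw [this, hz1]; ring
  have hGzero : ∀ n, G n (0 : Fin m → ℂ) := by
    intro n
    refine ⟨fun _ => 0, analyticAt_const, ?_⟩
    filter_upwards with z
    simp [hg]
  have hGmono : ∀ n₁ n₂ a, n₁ ≤ n₂ → G n₂ a → G n₁ a := by
    rintro n₁ n₂ a hle' ⟨h₁, h₁an, e₁⟩
    refine ⟨fun z => (z - p) ^ (n₂ - n₁) * h₁ z,
      ((analyticAt_id.sub analyticAt_const).pow _).mul h₁an, ?_⟩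
    filter_upwards [e₁] with z hz1
    rw [hz1, ← mul_assoc, ← pow_add, Nat.add_sub_cancel' hle']
  have hEex : ∀ a : Fin m → ℂ, a ≠ 0 → ∃ n, E n a := by
    intro a ha
    have hga : AnalyticAt ℂ (g a) p := hgaU a p hp
    obtain ⟨n, h, han, hne, hev⟩ :=
      hga.exists_eventuallyEq_pow_smul_nonzero_iff.mpr (hnotev a ha)
    exact ⟨n, h, han, hne, by simpa [smul_eq_mul] using hev⟩
  have helim : ∀ n a b, E n a → E n b → ∃ c : ℂ, G (n + 1) (a - c • b) := by
    rintro n a b ⟨h₁, h₁an, h₁p, e₁⟩ ⟨h₂, h₂an, h₂p, e₂⟩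
    set cc : ℂ := h₁ p / h₂ p with hcc
    set φ : ℂ → ℂ := fun z => h₁ z - cc * h₂ z with hφ
    have hφan : AnalyticAt ℂ φ p := h₁an.sub (analyticAt_const.mul h₂an)
    have hφp : φ p = 0 := by
      simp [hφ, hcc, div_mul_cancel₀ _ h₂p]
    obtain ⟨q, hq⟩ := hφan
    refine ⟨cc, dslope φ p, ⟨_, hq.has_fpower_series_dslope_fslope⟩, ?_⟩
    have hfac : ∀ z, φ z = (z - p) * dslope φ p z := by
      intro z
      have h' := sub_smul_dslope φ p z
      rw [hφp, sub_zero] at h'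
      rw [← h', smul_eq_mul]
    filter_upwards [e₁, e₂] with z hz1 hz2
    have hgl : g (a - cc • b) z = g a z - cc * g b z := by
      simp [hg, sub_mul, Finset.mul_sum, Finset.sum_sub_distrib, mul_assoc]
    rw [hgl, hz1, hz2]
    have h'' : (z - p) ^ n * h₁ z - cc * ((z - p) ^ n * h₂ z) = (z - p) ^ n * φ z := by
      rw [hφ]; ring
    rw [h'', hfac z]
    ring
  obtain ⟨w, hwind, -, ords, hmono, hws⟩ :=
    stmt7_aux E G hEG hle hGadd hGsmul hGzero hGmono hEex helim m
      (fun i => (Pi.basisFun ℂ (Fin m)) i) (Pi.basisFun ℂ (Fin m)).linearIndependent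
  refine ⟨Matrix.of w, Matrix.linearIndependent_rows_iff_isUnit.mp hwind, ords, hmono, ?_⟩
  intro i
  constructor
  · by_contra hcon
    push_neg at hcon
    exact hwind.ne_zero i (hUzero (w i) hcon)
  · exact hws i
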